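/- Let p be an odd prime and a ∈ F_p* a quadratic residue. Write p - 1 = 2^e · m with m odd. Let n ∈ F_p* be a quadratic non-residue, set z = n^m and b = a^m. Then there exists an even integer r ≥ 0 with b = z^r, and x = a^((m+1)/2) · z^(-r/2) satisfies x^2 = a in F_p. -/

import Mathlib

theorem tonelli_shanks_correct (p : ℕ) (hp : p.Prime) (hodd : p % 2 = 1)
    (e m : ℕ) (hm : Odd m) (hem : p - 1 = 2 ^ e * m)
    (a : ZMod p) (ha : a ≠ 0) (hQR : a ^ ((p - 1) / 2) = 1)
    (n : ZMod p) (hn : n ^ ((p - 1) / 2) = -1) :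
    ∃ r : ℕ, Even r ∧ a ^ m = (n ^ m) ^ r ∧
      (a ^ ((m + 1) / 2) * ((n ^ m) ^ (r / 2))⁻¹) ^ 2 = a := by
  haveI : Fact p.Prime := ⟨hp⟩
  have hp2 : p ≠ 2 := by intro h; rw [h] at hodd; norm_num at hodd
  have hp3 : 3 ≤ p := by
    rcases hp.two_le.lt_or_eq with h | h
    · omega
    · omega
  have hne1 : (-1 : ZMod p) ≠ 1 := by
    intro h
    have h2 : ((2 : ℕ) : ZMod p) = 0 := by push_cast; linear_combination -h
    have := (ZMod.natCast_eq_zero_iff 2 p).mp h2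
    have := (Nat.prime_dvd_prime_iff_eq hp Nat.prime_two).mp this
    exact hp2 this
  -- e ≥ 1
  have he : 1 ≤ e := by
    by_contra h
    have he0 : e = 0 := by omega
    rw [he0] at hem
    simp at hem
    have : Even (p - 1) := by
      refine Nat.Odd.sub_odd ?_ odd_one
      exact Nat.odd_iff.mpr hodd
    rw [hem] at this
    exact (Nat.not_even_iff_odd.mpr hm) this
  have hhalf : (p - 1) / 2 = 2 ^ (e - 1) * m := by
    have : p - 1 = 2 * (2 ^ (e - 1) * m) := by
      rw [hem]
      have : 2 ^ e = 2 * 2 ^ (e - 1) := by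
        conv_lhs => rw [show e = 1 + (e - 1) by omega]
        rw [pow_add, pow_one]
      rw [this]; ring
    omega
  have hn0 : n ≠ 0 := by
    intro h
    rw [h] at hn
    have hpos : 0 < (p - 1) / 2 := by
      rw [hhalf]
      have := hm.pos
      positivity
    rw [zero_pow (by omega)] at hn
    exact (neg_ne_zero.mpr (one_ne_zero : (1 : ZMod p) ≠ 0)) hn.symm
  -- units
  set au : (ZMod p)ˣ := Units.mk0 a ha with hau
  set nu : (ZMod p)ˣ := Units.mk0 n hn0 with hnu
  obtain ⟨g, hg⟩ := IsCyclic.exists_generator (α := (ZMod p)ˣ)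
  have hog : orderOf g = p - 1 := by
    rw [orderOf_eq_card_of_forall_mem_zpowers hg, Nat.card_eq_fintype_card,
      ZMod.card_units]
  obtain ⟨i, hi⟩ : au ∈ Submonoid.powers g := by
    obtain ⟨k, hk⟩ := hg au
    exact (mem_powers_iff_mem_zpowers ..).mpr ⟨k, hk⟩
  obtain ⟨j, hj⟩ : nu ∈ Submonoid.powers g := by
    obtain ⟨k, hk⟩ := hg nu
    exact (mem_powers_iff_mem_zpowers ..).mpr ⟨k, hk⟩
  -- i is even
  have hQRu : au ^ ((p - 1) / 2) = 1 := by
    ext; push_cast [hau]; exact hQR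
  have hieven : 2 ∣ i := by
    rw [← hi, ← pow_mul] at hQRu
    have := orderOf_dvd_of_pow_eq_one hQRu
    rw [hog, hhalf, hem] at this
    -- 2^e * m ∣ i * (2^(e-1) * m)
    have h2 : 2 ^ e ∣ i * 2 ^ (e - 1) := by
      have hmne : 0 < m := hm.pos
      have := (Nat.mul_dvd_mul_iff_right hmne).mp (by
        have : 2 ^ e * m ∣ i * 2 ^ (e - 1) * m := by
          calc 2 ^ e * m ∣ i * (2 ^ (e - 1) * m) := this
          _ = i * 2 ^ (e - 1) * m := by ring
        exact this)
      exact this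
    have : 2 * 2 ^ (e - 1) ∣ i * 2 ^ (e - 1) := by
      have h2e : (2 : ℕ) ^ e = 2 * 2 ^ (e - 1) := by
        conv_lhs => rw [show e = 1 + (e - 1) by omega]
        rw [pow_add, pow_one]
      rwa [h2e] at h2
    exact (Nat.mul_dvd_mul_iff_right (Nat.pow_pos (by norm_num) : 0 < 2 ^ (e-1))).mp this
  -- j is odd
  have hnu2 : nu ^ ((p - 1) / 2) ≠ 1 := by
    intro h
    have : n ^ ((p - 1) / 2) = 1 := by
      have := congrArg Units.val h
      push_cast [hnu] at this
      exact this
    rw [hn] at this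
    exact hne1 this
  have hjodd : ¬ 2 ∣ j := by
    intro hj2
    apply hnu2
    rw [← hj, ← pow_mul]
    apply orderOf_dvd_iff_pow_eq_one.mp
    rw [hog, hhalf, hem]
    obtain ⟨t, ht⟩ := hj2
    have h2e : (2 : ℕ) ^ e = 2 * 2 ^ (e - 1) := by
      conv_lhs => rw [show e = 1 + (e - 1) by omega]
      rw [pow_add, pow_one]
    rw [ht, h2e]
    exact ⟨t, by ring⟩
  -- inverse of j mod 2^e
  have hcop : Nat.Coprime (2 ^ e) j := by
    apply Nat.Coprime.pow_left
    exact (Nat.Prime.coprime_iff_not_dvd Nat.prime_two).mpr hjodd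
  obtain ⟨j', -, hj'⟩ := Nat.exists_mul_mod_eq_one_of_coprime hcop.symm
    (Nat.one_lt_two_pow_iff.mpr (by omega))
  -- r
  have hb : a ^ m = (n ^ m) ^ (i * j') := by
    have key : au ^ m = (nu ^ m) ^ (i * j') := by
      rw [← hi, ← hj, ← pow_mul, ← pow_mul, ← pow_mul]
      rw [pow_eq_pow_iff_modEq, hog, hem]
      have hmod : i ≡ j * (i * j') [MOD 2 ^ e] := by
        have : j * (i * j') = i * (j * j') := by ring
        rw [this]
        calc i = i * 1 := by ring
        _ ≡ i * (j * j') [MOD 2 ^ e] := by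
            apply Nat.ModEq.mul_left
            unfold Nat.ModEq
            rw [hj']
            rcases e with _ | e'
            · omega
            · rw [Nat.mod_eq_of_lt (Nat.one_lt_two_pow_iff.mpr (by omega))]
      calc i * m ≡ j * (i * j') * m [MOD 2 ^ e * m] := hmod.mul_right' m
      _ = j * m * (i * j') := by ring
      _ = j * (m * (i * j')) := by ring
    have := congrArg Units.val key
    push_cast [hau, hnu] at this
    exact this
  refine ⟨i * j', (by obtain ⟨t, ht⟩ := hieven; exact ⟨t * j', by subst ht; ring⟩), hb, ?_⟩
  have hz0 : (n ^ m) ^ (i * j') ≠ 0 := pow_ne_zero _ (pow_ne_zero _ hn0)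
  have hrd : i * j' / 2 * 2 = i * j' := Nat.div_mul_cancel (hieven.mul_right j')
  have hmd : (m + 1) / 2 * 2 = m + 1 := by
    obtain ⟨t, ht⟩ := hm; omega
  have hx : (a ^ ((m + 1) / 2) * ((n ^ m) ^ (i * j' / 2))⁻¹) ^ 2
      = a ^ (m + 1) * ((n ^ m) ^ (i * j'))⁻¹ := by
    rw [mul_pow, ← pow_mul, hmd, ← inv_pow, ← pow_mul, ← pow_mul, hrd]
    rw [inv_pow, ← pow_mul]
  rw [hx, pow_succ, hb]
  calc (n ^ m) ^ (i * j') * a * ((n ^ m) ^ (i * j'))⁻¹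
      = a * ((n ^ m) ^ (i * j') * ((n ^ m) ^ (i * j'))⁻¹) := by ring
  _ = a := by rw [mul_inv_cancel₀ hz0, mul_one]
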